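/- There exists a continuous bijection from Baire space ω^ω onto Cantor space 2^ω. -/

import Mathlib

namespace Stmt6

/-- Emit output bits from a prefix of the input sequence, given a pending run `r` of zeros. -/
def bitsAux : ℕ → List ℕ → List Bool
  | r, [] => List.replicate r false
  | r, 0 :: l => bitsAux (r + 1) l
  | r, (k + 1) :: l => List.replicate (Nat.pair r k) false ++ true :: bitsAux 0 l

/-- Decode input entries from a prefix of the output bits, given a pending run `s` of falses. -/
def entAux : ℕ → List Bool → List ℕ
  | _, [] => []
  | s, false :: l => entAux (s + 1) l
  | s, true :: l =>
      List.replicate (Nat.unpair s).1 0 ++ ((Nat.unpair s).2 + 1) :: entAux 0 l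

def pfx {α : Type*} (x : ℕ → α) (m : ℕ) : List α := List.ofFn fun i : Fin m => x i

lemma length_pfx {α : Type*} (x : ℕ → α) (m : ℕ) : (pfx x m).length = m := by
  simp [pfx]

lemma getElem_pfx {α : Type*} (x : ℕ → α) {m i : ℕ} (h : i < (pfx x m).length) :
    (pfx x m)[i] = x i :=
  List.getElem_ofFn _

lemma getD_pfx {α : Type*} (x : ℕ → α) {m n : ℕ} (h : n < m) (d : α) :
    (pfx x m).getD n d = x n := by
  rw [List.getD_eq_getElem _ _ (by simpa [length_pfx] using h)]
  exact getElem_pfx x _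

lemma pfx_succ {α : Type*} (x : ℕ → α) (m : ℕ) : pfx x (m + 1) = pfx x m ++ [x m] := by
  show List.ofFn (fun i : Fin (m + 1) => x ↑i) = List.ofFn (fun i : Fin m => x ↑i) ++ [x m]
  rw [List.ofFn_succ', List.concat_eq_append]
  simp

lemma pfx_prefix {α : Type*} (x : ℕ → α) {a b : ℕ} (h : a ≤ b) : pfx x a <+: pfx x b := by
  induction b, h using Nat.le_induction with
  | base => exact List.prefix_rfl
  | succ b hab ih => exact ih.trans ⟨[x b], (pfx_succ x b).symm⟩

lemma le_length_bitsAux : ∀ (l : List ℕ) (r : ℕ), r + l.length ≤ (bitsAux r l).length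
  | [], r => by simp [bitsAux]
  | 0 :: l, r => by
      have := le_length_bitsAux l (r + 1)
      simp only [bitsAux, List.length_cons]
      omega
  | (k + 1) :: l, r => by
      have := le_length_bitsAux l 0
      have hp := Nat.left_le_pair r k
      simp only [bitsAux, List.length_append, List.length_replicate, List.length_cons]
      omega

lemma length_entAux_le : ∀ (bl : List Bool) (s : ℕ), (entAux s bl).length ≤ s + bl.length
  | [], s => by simp [entAux]
  | false :: l, s => by
      have := length_entAux_le l (s + 1)
      simp only [entAux, List.length_cons]
      omega
  | true :: l, s => by
      have := length_entAux_le l 0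
      have hu := Nat.unpair_left_le s
      simp only [entAux, List.length_append, List.length_replicate, List.length_cons]
      omega

lemma replicate_prefix_replicate {α : Type*} (a : α) {r m : ℕ} (h : r ≤ m) :
    List.replicate r a <+: List.replicate m a :=
  ⟨List.replicate (m - r) a, by rw [← List.replicate_add, Nat.add_sub_cancel' h]⟩

lemma replicate_prefix_bitsAux : ∀ (l : List ℕ) (r : ℕ),
    List.replicate r false <+: bitsAux r l
  | [], r => List.prefix_rfl
  | 0 :: l, r =>
      (replicate_prefix_replicate false (Nat.le_succ r)).trans
        (replicate_prefix_bitsAux l (r + 1))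
  | (k + 1) :: l, r => by
      show List.replicate r false <+: List.replicate (Nat.pair r k) false ++ true :: bitsAux 0 l
      exact (replicate_prefix_replicate false (Nat.left_le_pair r k)).trans
        (List.prefix_append _ _)

lemma bitsAux_prefix : ∀ (l l₂ : List ℕ) (r : ℕ), bitsAux r l <+: bitsAux r (l ++ l₂)
  | [], l₂, r => by
      show List.replicate r false <+: bitsAux r l₂
      exact replicate_prefix_bitsAux l₂ r
  | 0 :: l, l₂, r => by
      show bitsAux (r + 1) l <+: bitsAux (r + 1) (l ++ l₂)
      exact bitsAux_prefix l l₂ (r + 1)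
  | (k + 1) :: l, l₂, r => by
      show List.replicate (Nat.pair r k) false ++ true :: bitsAux 0 l
          <+: List.replicate (Nat.pair r k) false ++ true :: bitsAux 0 (l ++ l₂)
      obtain ⟨t, ht⟩ := bitsAux_prefix l l₂ 0
      exact ⟨t, by rw [← ht]; simp⟩

lemma entAux_prefix : ∀ (bl l₂ : List Bool) (s : ℕ), entAux s bl <+: entAux s (bl ++ l₂)
  | [], l₂, s => List.nil_prefix
  | false :: l, l₂, s => by
      show entAux (s + 1) l <+: entAux (s + 1) (l ++ l₂)
      exact entAux_prefix l l₂ (s + 1)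
  | true :: l, l₂, s => by
      show List.replicate (Nat.unpair s).1 0 ++ ((Nat.unpair s).2 + 1) :: entAux 0 l
          <+: List.replicate (Nat.unpair s).1 0 ++ ((Nat.unpair s).2 + 1) :: entAux 0 (l ++ l₂)
      obtain ⟨t, ht⟩ := entAux_prefix l l₂ 0
      exact ⟨t, by rw [← ht]; simp⟩

lemma bitsAux_prefix_mono {u v : List ℕ} (h : u <+: v) (r : ℕ) :
    bitsAux r u <+: bitsAux r v := by
  obtain ⟨t, rfl⟩ := h; exact bitsAux_prefix u t r

lemma entAux_prefix_mono {u v : List Bool} (h : u <+: v) (s : ℕ) :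
    entAux s u <+: entAux s v := by
  obtain ⟨t, rfl⟩ := h; exact entAux_prefix u t s

lemma entAux_replicate_false : ∀ (m s : ℕ) (bl : List Bool),
    entAux s (List.replicate m false ++ bl) = entAux (s + m) bl
  | 0, s, bl => by simp [entAux]
  | m + 1, s, bl => by
      rw [List.replicate_succ, List.cons_append]
      show entAux (s + 1) (List.replicate m false ++ bl) = _
      rw [entAux_replicate_false m (s + 1) bl]
      congr 1
      omega

lemma bitsAux_replicate_zero : ∀ (m r : ℕ) (l : List ℕ),
    bitsAux r (List.replicate m 0 ++ l) = bitsAux (r + m) l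
  | 0, r, l => by simp [bitsAux]
  | m + 1, r, l => by
      rw [List.replicate_succ, List.cons_append]
      show bitsAux (r + 1) (List.replicate m 0 ++ l) = _
      rw [bitsAux_replicate_zero m (r + 1) l]
      congr 1
      omega

lemma bitsAux_append_trailing (t : ℕ) : ∀ (l : List ℕ) (r : ℕ),
    bitsAux r (l ++ List.replicate t 0) = bitsAux r l ++ List.replicate t false
  | [], r => by
      show bitsAux r (List.replicate t 0) = List.replicate r false ++ List.replicate t false
      rw [← List.append_nil (List.replicate t 0), bitsAux_replicate_zero t r []]
      show List.replicate (r + t) false = _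
      rw [List.replicate_add]
  | 0 :: l, r => by
      show bitsAux (r + 1) (l ++ List.replicate t 0) = bitsAux (r + 1) l ++ List.replicate t false
      exact bitsAux_append_trailing t l (r + 1)
  | (k + 1) :: l, r => by
      show List.replicate (Nat.pair r k) false ++ true :: bitsAux 0 (l ++ List.replicate t 0)
          = (List.replicate (Nat.pair r k) false ++ true :: bitsAux 0 l) ++ List.replicate t false
      rw [bitsAux_append_trailing t l 0]
      simp

lemma comp_C1 : ∀ (l : List ℕ) (r : ℕ),
    ∃ j, List.replicate r 0 ++ l = entAux 0 (bitsAux r l) ++ List.replicate j 0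
  | [], r => by
      refine ⟨r, ?_⟩
      show List.replicate r 0 ++ [] = entAux 0 (List.replicate r false) ++ _
      rw [← List.append_nil (List.replicate r false), entAux_replicate_false r 0 []]
      simp [entAux]
  | 0 :: l, r => by
      obtain ⟨j, hj⟩ := comp_C1 l (r + 1)
      refine ⟨j, ?_⟩
      show List.replicate r 0 ++ 0 :: l = entAux 0 (bitsAux (r + 1) l) ++ _
      rw [← hj, List.replicate_succ', List.append_assoc, List.singleton_append]
  | (k + 1) :: l, r => by
      obtain ⟨j, hj⟩ := comp_C1 l 0
      refine ⟨j, ?_⟩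
      show List.replicate r 0 ++ (k + 1) :: l
          = entAux 0 (List.replicate (Nat.pair r k) false ++ true :: bitsAux 0 l) ++ _
      rw [entAux_replicate_false (Nat.pair r k) 0 (true :: bitsAux 0 l)]
      show _ = (List.replicate (Nat.unpair (0 + Nat.pair r k)).1 0
          ++ ((Nat.unpair (0 + Nat.pair r k)).2 + 1) :: entAux 0 (bitsAux 0 l)) ++ _
      rw [Nat.zero_add, Nat.unpair_pair]
      simp only [List.replicate_zero, List.nil_append] at hj
      rw [List.append_assoc, List.cons_append, ← hj]

lemma comp_C2 : ∀ (bl : List Bool) (s : ℕ),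
    ∃ j, List.replicate s false ++ bl = bitsAux 0 (entAux s bl) ++ List.replicate j false
  | [], s => by
      refine ⟨s, ?_⟩
      show List.replicate s false ++ [] = bitsAux 0 [] ++ _
      simp [bitsAux]
  | false :: l, s => by
      obtain ⟨j, hj⟩ := comp_C2 l (s + 1)
      refine ⟨j, ?_⟩
      show List.replicate s false ++ false :: l = bitsAux 0 (entAux (s + 1) l) ++ _
      rw [← hj, List.replicate_succ', List.append_assoc, List.singleton_append]
  | true :: l, s => by
      obtain ⟨j, hj⟩ := comp_C2 l 0
      refine ⟨j, ?_⟩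
      show List.replicate s false ++ true :: l
          = bitsAux 0 (List.replicate (Nat.unpair s).1 0
              ++ ((Nat.unpair s).2 + 1) :: entAux 0 l) ++ _
      rw [bitsAux_replicate_zero (Nat.unpair s).1 0 _]
      show _ = (List.replicate (Nat.pair (0 + (Nat.unpair s).1) (Nat.unpair s).2) false
          ++ true :: bitsAux 0 (entAux 0 l)) ++ _
      rw [Nat.zero_add, Nat.pair_unpair]
      simp only [List.replicate_zero, List.nil_append] at hj
      rw [List.append_assoc, List.cons_append, ← hj]

lemma getD_of_prefix {α : Type*} {u v : List α} (h : u <+: v) {n : ℕ} (hn : n < u.length)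
    (d : α) : v.getD n d = u.getD n d := by
  obtain ⟨t, rfl⟩ := h
  exact List.getD_append u t d n hn

lemma getD_append_replicate {α : Type*} (l : List α) (j n : ℕ) (d : α) :
    (l ++ List.replicate j d).getD n d = l.getD n d := by
  rcases Nat.lt_or_ge n l.length with h | h
  · exact List.getD_append _ _ _ _ h
  · rw [List.getD_append_right _ _ _ _ h, List.getD_eq_default _ _ h]
    rcases Nat.lt_or_ge (n - l.length) j with h2 | h2
    · rw [List.getD_eq_getElem _ _ (by simpa using h2)]
      simp
    · exact List.getD_eq_default _ _ (by simpa using h2)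

/-- The continuous bijection from Baire space to Cantor space. -/
def F (x : ℕ → ℕ) : ℕ → Bool := fun n => (bitsAux 0 (pfx x (n + 1))).getD n false

lemma le_length_bits_pfx (x : ℕ → ℕ) (m : ℕ) : m ≤ (bitsAux 0 (pfx x m)).length := by
  have := le_length_bitsAux (pfx x m) 0
  rwa [Nat.zero_add, length_pfx] at this

lemma F_eq (x : ℕ → ℕ) {m n : ℕ} (h : n < (bitsAux 0 (pfx x m)).length) :
    F x n = (bitsAux 0 (pfx x m)).getD n false := by
  have h1 : bitsAux 0 (pfx x m) <+: bitsAux 0 (pfx x (max m (n + 1))) :=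
    bitsAux_prefix_mono (pfx_prefix x (le_max_left _ _)) 0
  have h2 : bitsAux 0 (pfx x (n + 1)) <+: bitsAux 0 (pfx x (max m (n + 1))) :=
    bitsAux_prefix_mono (pfx_prefix x (le_max_right _ _)) 0
  have hn2 : n < (bitsAux 0 (pfx x (n + 1))).length :=
    lt_of_lt_of_le (Nat.lt_succ_self n) (le_length_bits_pfx x (n + 1))
  show (bitsAux 0 (pfx x (n + 1))).getD n false = _
  rw [← getD_of_prefix h2 hn2 false, ← getD_of_prefix h1 h false]

open Classical in
/-- The inverse map from Cantor space to Baire space. -/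
noncomputable def G (y : ℕ → Bool) : ℕ → ℕ := fun n =>
  if h : ∃ m, n < (entAux 0 (pfx y m)).length then
    (entAux 0 (pfx y (Nat.find h))).getD n 0
  else 0

lemma G_eq (y : ℕ → Bool) {m n : ℕ} (h : n < (entAux 0 (pfx y m)).length) :
    G y n = (entAux 0 (pfx y m)).getD n 0 := by
  have hex : ∃ m, n < (entAux 0 (pfx y m)).length := ⟨m, h⟩
  have h1 : entAux 0 (pfx y m) <+: entAux 0 (pfx y (max m (Nat.find hex))) :=
    entAux_prefix_mono (pfx_prefix y (le_max_left _ _)) 0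
  have h2 : entAux 0 (pfx y (Nat.find hex)) <+: entAux 0 (pfx y (max m (Nat.find hex))) :=
    entAux_prefix_mono (pfx_prefix y (le_max_right _ _)) 0
  simp only [G, dif_pos hex]
  rw [← getD_of_prefix h2 (Nat.find_spec hex) 0, getD_of_prefix h1 h 0]

lemma G_eq_zero (y : ℕ → Bool) {n : ℕ}
    (h : ¬∃ m, n < (entAux 0 (pfx y m)).length) : G y n = 0 := by
  simp only [G, dif_neg h]

lemma pfx_F (x : ℕ → ℕ) (m : ℕ) : pfx (F x) m = (bitsAux 0 (pfx x m)).take m := by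
  have hlen := le_length_bits_pfx x m
  apply List.ext_getElem
  · simp only [length_pfx, List.length_take]
    omega
  · intro i h1 h2
    have hi : i < m := by simpa [length_pfx] using h1
    have hib : i < (bitsAux 0 (pfx x m)).length := lt_of_lt_of_le hi hlen
    rw [List.getElem_take, getElem_pfx (F x) h1, F_eq x hib, List.getD_eq_getElem _ _ hib]

lemma GF (x : ℕ → ℕ) : G (F x) = x := by
  funext n
  by_cases h : ∃ m, n < (entAux 0 (pfx (F x) m)).length
  · obtain ⟨m, hm⟩ := h
    rw [G_eq _ hm]
    have hpre : entAux 0 (pfx (F x) m) <+: entAux 0 (bitsAux 0 (pfx x m)) := by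
      rw [pfx_F]
      exact entAux_prefix_mono (List.take_prefix _ _) 0
    rw [← getD_of_prefix hpre hm 0]
    obtain ⟨j, hj⟩ := comp_C1 (pfx x m) 0
    simp only [List.replicate_zero, List.nil_append] at hj
    have hn_lt : n < (entAux 0 (bitsAux 0 (pfx x m))).length := lt_of_lt_of_le hm hpre.length_le
    have hnm : n < m := by
      have := length_entAux_le (pfx (F x) m) 0
      rw [Nat.zero_add, length_pfx] at this
      omega
    calc (entAux 0 (bitsAux 0 (pfx x m))).getD n 0
        = (entAux 0 (bitsAux 0 (pfx x m)) ++ List.replicate j 0).getD n 0 :=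
          (List.getD_append _ _ _ _ hn_lt).symm
      _ = (pfx x m).getD n 0 := by rw [← hj]
      _ = x n := getD_pfx x hnm 0
  · rw [G_eq_zero _ h]
    push_neg at h
    have hM : n + 1 ≤ (bitsAux 0 (pfx x (n + 1))).length := le_length_bits_pfx x (n + 1)
    have hBpre : bitsAux 0 (pfx x (n + 1))
        <+: bitsAux 0 (pfx x (bitsAux 0 (pfx x (n + 1))).length) :=
      bitsAux_prefix_mono (pfx_prefix x hM) 0
    have htake : pfx (F x) (bitsAux 0 (pfx x (n + 1))).length = bitsAux 0 (pfx x (n + 1)) := by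
      rw [pfx_F]
      exact (List.prefix_iff_eq_take.mp hBpre).symm
    have hlenB : (entAux 0 (bitsAux 0 (pfx x (n + 1)))).length ≤ n := by
      have := h (bitsAux 0 (pfx x (n + 1))).length
      rwa [htake] at this
    obtain ⟨j, hj⟩ := comp_C1 (pfx x (n + 1)) 0
    simp only [List.replicate_zero, List.nil_append] at hj
    have hx : x n = (entAux 0 (bitsAux 0 (pfx x (n + 1)))).getD n 0 := by
      conv_lhs => rw [← getD_pfx x (Nat.lt_succ_self n) 0, hj]
      exact getD_append_replicate _ _ _ _
    rw [hx, List.getD_eq_default _ _ hlenB]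

lemma FG (y : ℕ → Bool) : F (G y) = y := by
  classical
  funext n
  by_cases h : ∃ M, n + 1 ≤ (entAux 0 (pfx y M)).length
  · obtain ⟨M, hM⟩ := h
    have hnM : n < M := by
      have := length_entAux_le (pfx y M) 0
      rw [Nat.zero_add, length_pfx] at this
      omega
    have hpfxG : pfx (G y) (n + 1) = (entAux 0 (pfx y M)).take (n + 1) := by
      apply List.ext_getElem
      · simp only [length_pfx, List.length_take]
        omega
      · intro i h1 h2
        have hi : i < n + 1 := by simpa [length_pfx] using h1
        have hiE : i < (entAux 0 (pfx y M)).length := lt_of_lt_of_le hi hM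
        rw [List.getElem_take, getElem_pfx (G y) h1, G_eq y hiE,
          List.getD_eq_getElem _ _ hiE]
    have hpre : bitsAux 0 ((entAux 0 (pfx y M)).take (n + 1)) <+: bitsAux 0 (entAux 0 (pfx y M)) :=
      bitsAux_prefix_mono (List.take_prefix _ _) 0
    have hlt : n < (bitsAux 0 ((entAux 0 (pfx y M)).take (n + 1))).length := by
      have := le_length_bitsAux ((entAux 0 (pfx y M)).take (n + 1)) 0
      simp only [Nat.zero_add, List.length_take] at this
      omega
    have hltE : n < (bitsAux 0 (entAux 0 (pfx y M))).length := lt_of_lt_of_le hlt hpre.length_le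
    obtain ⟨j, hj⟩ := comp_C2 (pfx y M) 0
    simp only [List.replicate_zero, List.nil_append] at hj
    calc F (G y) n = (bitsAux 0 (pfx (G y) (n + 1))).getD n false := rfl
      _ = (bitsAux 0 ((entAux 0 (pfx y M)).take (n + 1))).getD n false := by rw [hpfxG]
      _ = (bitsAux 0 (entAux 0 (pfx y M))).getD n false := (getD_of_prefix hpre hlt false).symm
      _ = (bitsAux 0 (entAux 0 (pfx y M)) ++ List.replicate j false).getD n false :=
          (List.getD_append _ _ _ _ hltE).symm
      _ = (pfx y M).getD n false := by rw [← hj]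
      _ = y n := getD_pfx y hnM false
  · push_neg at h
    have hbd : ∀ M, (entAux 0 (pfx y M)).length ≤ n := fun M => by
      have := h M
      omega
    obtain ⟨M₀, hM₀⟩ : ∃ M, (entAux 0 (pfx y M)).length
        = Nat.findGreatest (fun L => ∃ M, (entAux 0 (pfx y M)).length = L) n := by
      obtain ⟨M, hMe⟩ := Nat.findGreatest_spec
        (P := fun L => ∃ M, (entAux 0 (pfx y M)).length = L) (hbd 0) ⟨0, rfl⟩
      exact ⟨M, hMe⟩
    have hmax : ∀ M, (entAux 0 (pfx y M)).length ≤ (entAux 0 (pfx y M₀)).length := fun M => by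
      rw [hM₀]
      exact Nat.le_findGreatest (hbd M) ⟨M, rfl⟩
    have hstab : ∀ M, M₀ ≤ M → entAux 0 (pfx y M) = entAux 0 (pfx y M₀) := by
      intro M hMM
      have hpre := entAux_prefix_mono (pfx_prefix y hMM) 0
      exact (hpre.eq_of_length (le_antisymm hpre.length_le (hmax M))).symm
    have hEn : (entAux 0 (pfx y M₀)).length ≤ n := hbd M₀
    have hpfxG : pfx (G y) (n + 1)
        = entAux 0 (pfx y M₀) ++ List.replicate (n + 1 - (entAux 0 (pfx y M₀)).length) 0 := by
      apply List.ext_getElem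
      · simp only [length_pfx, List.length_append, List.length_replicate]
        omega
      · intro i h1 h2
        have hi : i < n + 1 := by simpa [length_pfx] using h1
        rw [getElem_pfx (G y) h1]
        rcases Nat.lt_or_ge i (entAux 0 (pfx y M₀)).length with hiE | hiE
        · rw [List.getElem_append_left hiE, G_eq y hiE, List.getD_eq_getElem _ _ hiE]
        · rw [List.getElem_append_right hiE]
          have hno : ¬∃ m, i < (entAux 0 (pfx y m)).length := by
            push_neg
            exact fun m => le_trans (hmax m) hiE
          rw [G_eq_zero y hno]
          simp
    obtain ⟨j, hj⟩ := comp_C2 (pfx y (max M₀ (n + 1))) 0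
    simp only [List.replicate_zero, List.nil_append] at hj
    rw [hstab _ (le_max_left _ _)] at hj
    have hyn : y n = (bitsAux 0 (entAux 0 (pfx y M₀))).getD n false := by
      rw [← getD_pfx y (lt_of_lt_of_le (Nat.lt_succ_self n) (le_max_right M₀ (n + 1))) false,
        hj, getD_append_replicate]
    calc F (G y) n = (bitsAux 0 (pfx (G y) (n + 1))).getD n false := rfl
      _ = (bitsAux 0 (entAux 0 (pfx y M₀)
            ++ List.replicate (n + 1 - (entAux 0 (pfx y M₀)).length) 0)).getD n false := by
          rw [hpfxG]
      _ = (bitsAux 0 (entAux 0 (pfx y M₀))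
            ++ List.replicate (n + 1 - (entAux 0 (pfx y M₀)).length) false).getD n false := by
          rw [bitsAux_append_trailing]
      _ = (bitsAux 0 (entAux 0 (pfx y M₀))).getD n false := getD_append_replicate _ _ _ _
      _ = y n := hyn.symm

lemma F_continuous : Continuous F := by
  apply continuous_pi
  intro n
  have hrw : (fun x => F x n)
      = (fun v : Fin (n + 1) → ℕ => (bitsAux 0 (List.ofFn v)).getD n false)
        ∘ (fun (x : ℕ → ℕ) (i : Fin (n + 1)) => x i) := rfl
  rw [hrw]
  exact Continuous.comp continuous_of_discreteTopology
    (continuous_pi fun i => continuous_apply _)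

end Stmt6

theorem stmt_6 : ∃ f : (ℕ → ℕ) → (ℕ → Bool), Continuous f ∧ Function.Bijective f := by
  exact ⟨Stmt6.F, Stmt6.F_continuous,
    Function.bijective_iff_has_inverse.mpr ⟨Stmt6.G, Stmt6.GF, Stmt6.FG⟩⟩
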